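/- If there exists (beta_0,...,beta_{2^d-1}) achieving indifference, i.e. such that for every simple cycle s of the d-dimensional de Bruijn graph the average (1/|s|) * sum over vertices m on s of [ (q(m)-r(m))^2 - b_{s,m} beta_m ] takes the same value M for all s, then M = 2^{-d} * sum over m of (q(m)-r(m))^2, and this common value is simultaneously the optimal value of both the investor's and the market's linear programs. -/

import Mathlib

/-- The left-shift map of the `d`-dimensional de Bruijn graph on 2 symbols. -/
def deBruijnShift (d : ℕ) (m : Fin d → Bool) (c : Bool) : Fin d → Bool :=
  fun i => if h : (i : ℕ) + 1 < d then m ⟨(i : ℕ) + 1, h⟩ else c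

/-- A simple cycle of the de Bruijn graph, recorded as the list of its edges
`(vertex, label)`. -/
def IsSimpleCycleDB (d : ℕ) (L : List ((Fin d → Bool) × Bool)) : Prop :=
  L ≠ [] ∧ (L.map Prod.fst).Nodup ∧
  ∀ i : Fin L.length,
    deBruijnShift d (L.get i).1 (L.get i).2
      = (L.get ⟨((i : ℕ) + 1) % L.length, Nat.mod_lt _ i.pos⟩).1

/-- Cycle-weighted regret sum `∑_{m ∈ s} [(q m - r m)² - b_{s,m} β m]`. -/
def cycleSum (d : ℕ) (q r β : (Fin d → Bool) → ℝ)
    (L : List ((Fin d → Bool) × Bool)) : ℝ :=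
  (L.map fun e => (q e.1 - r e.1) ^ 2 - (if e.2 then β e.1 else -β e.1)).sum

/-- Feasibility for the investor's linear program. -/
def InvestorFeasible (d : ℕ) (q r β : (Fin d → Bool) → ℝ) (M : ℝ) : Prop :=
  ∀ L, IsSimpleCycleDB d L → cycleSum d q r β L ≤ (L.length : ℝ) * M

/-- Feasibility for the market's linear program. -/
def MarketFeasible (d : ℕ) (q r β : (Fin d → Bool) → ℝ) (M : ℝ) : Prop :=
  ∀ L, IsSimpleCycleDB d L → (L.length : ℝ) * M ≤ cycleSum d q r β L

namespace DBAux

open Function Finset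

variable (d : ℕ)

abbrev E := (Fin d → Bool) × Bool

def WE : E d ≃ (Fin (d+1) → Bool) where
  toFun e := fun i => if h : (i : ℕ) < d then e.1 ⟨i, h⟩ else e.2
  invFun w := (fun i => w i.castSucc, w (Fin.last d))
  left_inv e := by
    refine Prod.ext (funext fun i => ?_) ?_
    · simp [Fin.coe_castSucc, i.isLt]
    · simp [Fin.last]
  right_inv w := by
    funext i
    by_cases h : (i : ℕ) < d
    · simp only [dif_pos h]
      congr 1
    · simp only [dif_neg h]
      congr 1
      have := i.isLt
      exact (Fin.ext (by omega : (i:ℕ) = d)).symm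

def sig : Equiv.Perm (E d) :=
  ((WE d).trans (Equiv.arrowCongr (finRotate (d+1)).symm (Equiv.refl Bool))).trans (WE d).symm

lemma WE_sig (e : E d) : WE d (sig d e) = (WE d e) ∘ (finRotate (d+1)) := by
  simp only [sig, Equiv.trans_apply, Equiv.apply_symm_apply, Equiv.arrowCongr_apply,
    Equiv.coe_refl, Equiv.symm_symm]
  rfl

lemma sig_fst (e : E d) : (sig d e).1 = deBruijnShift d e.1 e.2 := by
  funext i
  have h1 : (sig d e).1 i = WE d (sig d e) i.castSucc := by
    simp [WE, Fin.coe_castSucc, i.isLt]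
  have h2 : (finRotate (d+1)) i.castSucc = ⟨(i:ℕ)+1, by omega⟩ := by
    rw [finRotate_succ_apply]
    apply Fin.ext
    simp [Fin.add_def, Nat.mod_eq_of_lt (by omega : (i:ℕ)+1 < d+1)]
  rw [h1, WE_sig, Function.comp_apply, h2]
  simp [WE, deBruijnShift]


lemma WE_castSucc (e : E d) (i : Fin d) : WE d e i.castSucc = e.1 i := by
  have hi : ((i.castSucc : Fin (d+1)) : ℕ) < d := by simp [Fin.coe_castSucc, i.isLt]
  show (if h : _ then _ else _) = _
  rw [dif_pos hi]
  congr 1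

lemma WE_last (e : E d) : WE d e (Fin.last d) = e.2 := by
  have hl : ¬ ((Fin.last d : Fin (d+1)) : ℕ) < d := by simp
  show (if h : _ then _ else _) = _
  rw [dif_neg hl]

def cnt (e : E d) : ℕ := ∑ i : Fin (d+1), if WE d e i then 1 else 0

lemma cnt_sig (e : E d) : cnt d (sig d e) = cnt d e := by
  unfold cnt
  simp only [WE_sig, Function.comp_apply]
  exact Equiv.sum_comp (finRotate (d+1)) (fun j => if WE d e j then 1 else 0)

lemma cnt_iter (k : ℕ) (e : E d) : cnt d ((⇑(sig d))^[k] e) = cnt d e := by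
  induction k with
  | zero => rfl
  | succ n ih => rw [Function.iterate_succ_apply', cnt_sig, ih]

lemma eq_of_fst_cnt {a b : E d} (h1 : a.1 = b.1) (h2 : cnt d a = cnt d b) : a = b := by
  have key : ∀ i : Fin d, (WE d a i.castSucc) = WE d b i.castSucc := by
    intro i
    rw [WE_castSucc, WE_castSucc, h1]
  rw [cnt, cnt, Fin.sum_univ_castSucc, Fin.sum_univ_castSucc] at h2
  have hs : ∑ i : Fin d, (if WE d a i.castSucc then (1:ℕ) else 0)
      = ∑ i : Fin d, (if WE d b i.castSucc then (1:ℕ) else 0) :=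
    Finset.sum_congr rfl fun i _ => by rw [key i]
  rw [hs, WE_last, WE_last] at h2
  have h2' := Nat.add_left_cancel h2
  have ha2 : a.2 = b.2 := by
    cases ha : a.2 <;> cases hb : b.2 <;> rw [ha, hb] at h2' <;> simp_all
  exact Prod.ext h1 ha2

lemma mem_pp (e : E d) : e ∈ Function.periodicPts ⇑(sig d) := by
  refine ⟨orderOf (sig d), orderOf_pos _, ?_⟩
  show (⇑(sig d))^[orderOf (sig d)] e = e
  rw [← Equiv.Perm.coe_pow, pow_orderOf_eq_one]
  rfl

noncomputable def per (e : E d) : ℕ := Function.minimalPeriod ⇑(sig d) e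

lemma per_pos (e : E d) : 0 < per d e :=
  Function.minimalPeriod_pos_of_mem_periodicPts (mem_pp d e)

noncomputable def cyc (e : E d) : List (E d) := (List.range (per d e)).map (fun k => (⇑(sig d))^[k] e)

lemma cyc_length (e : E d) : (cyc d e).length = per d e := by simp [cyc]

lemma cyc_get (e : E d) (i : Fin (cyc d e).length) :
    (cyc d e).get i = (⇑(sig d))^[(i : ℕ)] e := by
  rw [List.get_eq_getElem]
  simp [cyc]

lemma iter_fst_inj (e : E d) : ∀ k l : ℕ, k < per d e → l < per d e →
    ((⇑(sig d))^[k] e).1 = ((⇑(sig d))^[l] e).1 → k = l := by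
  intro k l hk hl h
  have hab : (⇑(sig d))^[k] e = (⇑(sig d))^[l] e :=
    eq_of_fst_cnt d h (by rw [cnt_iter, cnt_iter])
  exact (Function.iterate_eq_iterate_iff_of_lt_minimalPeriod hk hl).mp hab

lemma cyc_simple (e : E d) : IsSimpleCycleDB d (cyc d e) := by
  refine ⟨?_, ?_, ?_⟩
  · exact List.ne_nil_of_length_pos (by rw [cyc_length]; exact per_pos d e)
  · rw [cyc, List.map_map]
    refine List.Nodup.map_on ?_ List.nodup_range
    intro x hx y hy hxy
    exact iter_fst_inj d e x y (List.mem_range.mp hx) (List.mem_range.mp hy) hxy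
  · intro i
    rw [cyc_get, cyc_get]
    show deBruijnShift d ((⇑(sig d))^[(i:ℕ)] e).1 ((⇑(sig d))^[(i:ℕ)] e).2 = _
    rw [← sig_fst]
    show (((⇑(sig d))^[1]) ((⇑(sig d))^[(i:ℕ)] e)).1 = _
    rw [← Function.iterate_add_apply]
    have hlen : (cyc d e).length = per d e := cyc_length d e
    have : (⇑(sig d))^[(1 + (i:ℕ)) % per d e] e = (⇑(sig d))^[1 + (i:ℕ)] e :=
      Function.iterate_mod_minimalPeriod_eq
    simp only [hlen]
    rw [Nat.add_comm (i:ℕ) 1, this]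

lemma cyc_nodup (e : E d) : (cyc d e).Nodup :=
  List.Nodup.of_map Prod.fst (cyc_simple d e).2.1

noncomputable def orb (e : E d) : Finset (E d) := (cyc d e).toFinset

lemma mem_orb (x e : E d) : x ∈ orb d e ↔ ∃ k : ℕ, (⇑(sig d))^[k] e = x := by
  constructor
  · intro hx
    simp only [orb, List.mem_toFinset, cyc, List.mem_map, List.mem_range] at hx
    obtain ⟨k, _, hk⟩ := hx
    exact ⟨k, hk⟩
  · rintro ⟨k, rfl⟩
    simp only [orb, List.mem_toFinset, cyc, List.mem_map, List.mem_range]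
    exact ⟨k % per d e, Nat.mod_lt _ (per_pos d e), Function.iterate_mod_minimalPeriod_eq⟩

lemma self_mem_orb (e : E d) : e ∈ orb d e := (mem_orb d e e).2 ⟨0, rfl⟩

lemma orb_eq {x e : E d} (hx : x ∈ orb d e) : orb d x = orb d e := by
  obtain ⟨k, rfl⟩ := (mem_orb d x e).1 hx
  ext y
  rw [mem_orb, mem_orb]
  constructor
  · rintro ⟨j, rfl⟩
    exact ⟨j + k, by rw [Function.iterate_add_apply]⟩
  · rintro ⟨j, rfl⟩
    set p := per d e with hp
    have hppos := per_pos d e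
    have hms : p * (k / p + 1) = p * (k/p) + p := Nat.mul_succ p _
    have hdm := Nat.div_add_mod k p
    have hmlt : k % p < p := Nat.mod_lt _ hppos
    refine ⟨j + (p * (k / p + 1) - k), ?_⟩
    have hsk : (p * (k / p + 1) - k) + k = p * (k / p + 1) := by omega
    have key : (⇑(sig d))^[p * (k / p + 1)] e = e :=
      (Function.isPeriodicPt_minimalPeriod (⇑(sig d)) e).mul_const _
    rw [Function.iterate_add_apply, ← Function.iterate_add_apply (⇑(sig d)) _ k e, hsk, key]

noncomputable def lin : LinearOrder (E d) :=
  LinearOrder.lift' (⇑(Fintype.equivFin (E d))) (Fintype.equivFin (E d)).injective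

private lemma min'_congr {α : Type*} [LinearOrder α] {s t : Finset α} (h : s = t)
    (hs : s.Nonempty) : s.min' hs = t.min' (h ▸ hs) := by subst h; rfl

noncomputable def rho (e : E d) : E d :=
  @Finset.min' _ (lin d) (orb d e) ⟨e, self_mem_orb d e⟩

lemma rho_mem (e : E d) : rho d e ∈ orb d e := @Finset.min'_mem _ (lin d) _ _

lemma rho_orb {x e : E d} (h : x ∈ orb d e) : rho d x = rho d e :=
  @min'_congr _ (lin d) _ _ (orb_eq d h) _

lemma rho_fix (e : E d) : rho d (rho d e) = rho d e := rho_orb d (rho_mem d e)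

lemma fiber (j : E d) (hj : rho d j = j) :
    Finset.univ.filter (fun x => rho d x = j) = orb d j := by
  ext x
  simp only [Finset.mem_filter, Finset.mem_univ, true_and]
  constructor
  · intro h
    have h1 : j ∈ orb d x := h ▸ rho_mem d x
    have h2 := orb_eq d h1
    rw [h2]
    exact self_mem_orb d x
  · intro h
    rw [rho_orb d h, hj]

noncomputable def reps : Finset (E d) := Finset.univ.filter (fun j => rho d j = j)

lemma decomp (f : E d → ℝ) :
    ∑ e : E d, f e = ∑ j ∈ reps d, ((cyc d j).map f).sum := by
  rw [← Finset.sum_fiberwise_of_maps_to (g := rho d) (t := reps d)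
      (fun i _ => by simp [reps, rho_fix]) f]
  refine Finset.sum_congr rfl fun j hj => ?_
  have hj' : rho d j = j := (Finset.mem_filter.1 hj).2
  rw [fiber d j hj', orb, List.sum_toFinset f (cyc_nodup d j)]

lemma lengths_sum : ∑ j ∈ reps d, ((cyc d j).length : ℝ) = 2 ^ (d + 1) := by
  have h := decomp d (fun _ => (1:ℝ))
  simp only [Finset.sum_const, Finset.card_univ, nsmul_eq_mul, mul_one] at h
  have hcard : (Fintype.card (E d) : ℝ) = 2 ^ (d+1) := by
    simp [E, Fintype.card_prod, Fintype.card_fun, pow_succ]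
  rw [hcard] at h
  have hmap : ∀ (l : List (E d)), (l.map fun _ => (1:ℝ)).sum = (l.length : ℝ) := by
    intro l
    induction l with
    | nil => simp
    | cons a l ih => simp only [List.map_cons, List.sum_cons, ih, List.length_cons]; push_cast; ring
  simp only [hmap] at h
  exact h.symm

end DBAux

/-- If some `β` achieves indifference — every simple cycle has the same
cycle-averaged value `M` — then `M = 2^{-d} ∑_m (q m - r m)²`, and this common
value is simultaneously the optimal value of the investor's linear program
(a minimum) and of the market's linear program (a maximum). -/
theorem indifference_optimal_values (d : ℕ) (q r β : (Fin d → Bool) → ℝ) (M : ℝ)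
    (hind : ∀ L, IsSimpleCycleDB d L → cycleSum d q r β L = (L.length : ℝ) * M) :
    M = (∑ m : Fin d → Bool, (q m - r m) ^ 2) / 2 ^ d ∧
    IsLeast {M' : ℝ | ∃ β', InvestorFeasible d q r β' M'} M ∧
    IsGreatest {M' : ℝ | ∃ β', MarketFeasible d q r β' M'} M := by
  classical
  set S := ∑ m : Fin d → Bool, (q m - r m) ^ 2 with hS
  have hsum : ∀ b : (Fin d → Bool) → ℝ,
      ∑ e : DBAux.E d, ((q e.1 - r e.1) ^ 2 - (if e.2 then b e.1 else -b e.1)) = 2 * S := by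
    intro b
    rw [Fintype.sum_prod_type]
    have hm : ∀ m : Fin d → Bool,
        ∑ c : Bool, ((q m - r m) ^ 2 - (if c then b m else -b m)) = 2 * (q m - r m) ^ 2 := by
      intro m
      rw [Fintype.sum_bool, if_pos rfl, if_neg (by simp : ¬ (false = true))]
      ring
    rw [Finset.sum_congr rfl fun m _ => hm m, ← Finset.mul_sum]
  have hpow : (0:ℝ) < 2 ^ d := by positivity
  have hpow1 : ((2:ℝ) ^ (d+1)) = 2 * 2 ^ d := by ring
  have hupper : ∀ b M', InvestorFeasible d q r b M' → S ≤ 2 ^ d * M' := by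
    intro b M' hb
    have hdec := DBAux.decomp d (fun e => (q e.1 - r e.1) ^ 2 - (if e.2 then b e.1 else -b e.1))
    have hle : ∑ j ∈ DBAux.reps d,
        ((DBAux.cyc d j).map fun e => (q e.1 - r e.1) ^ 2 - (if e.2 then b e.1 else -b e.1)).sum
        ≤ ∑ j ∈ DBAux.reps d, ((DBAux.cyc d j).length : ℝ) * M' :=
      Finset.sum_le_sum fun j _ => hb (DBAux.cyc d j) (DBAux.cyc_simple d j)
    rw [← hdec, hsum b] at hle
    rw [← Finset.sum_mul, DBAux.lengths_sum, hpow1] at hle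
    linarith
  have hlower : ∀ b M', MarketFeasible d q r b M' → 2 ^ d * M' ≤ S := by
    intro b M' hb
    have hdec := DBAux.decomp d (fun e => (q e.1 - r e.1) ^ 2 - (if e.2 then b e.1 else -b e.1))
    have hle : ∑ j ∈ DBAux.reps d, ((DBAux.cyc d j).length : ℝ) * M'
        ≤ ∑ j ∈ DBAux.reps d,
        ((DBAux.cyc d j).map fun e => (q e.1 - r e.1) ^ 2 - (if e.2 then b e.1 else -b e.1)).sum :=
      Finset.sum_le_sum fun j _ => hb (DBAux.cyc d j) (DBAux.cyc_simple d j)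
    rw [← hdec, hsum b] at hle
    rw [← Finset.sum_mul, DBAux.lengths_sum, hpow1] at hle
    linarith
  have hMfeasI : InvestorFeasible d q r β M := fun L hL => le_of_eq (hind L hL)
  have hMfeasM : MarketFeasible d q r β M := fun L hL => ge_of_eq (hind L hL)
  have hSM : S = 2 ^ d * M :=
    le_antisymm (hupper β M hMfeasI) (hlower β M hMfeasM)
  refine ⟨?_, ⟨⟨β, hMfeasI⟩, ?_⟩, ⟨β, hMfeasM⟩, ?_⟩
  · rw [hSM]
    field_simp
  · rintro M' ⟨b, hb⟩
    have h := hupper b M' hb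
    rw [hSM] at h
    exact (mul_le_mul_iff_right₀ hpow).mp h
  · rintro M' ⟨b, hb⟩
    have h := hlower b M' hb
    rw [hSM] at h
    exact (mul_le_mul_iff_right₀ hpow).mp h
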